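/- Let G be a graph with maximum degree Δ, let X be a module of G, and let α be a frozen (Δ+1)-colouring of G. If β is obtained from α by permuting the colours appearing on X (via any permutation of the colour set applied only to vertices of X that fixes colours not appearing on X, equivalently by a transposition of two colours a, b both appearing on X, swapping them on X only), then β is also a frozen (Δ+1)-colouring of G. -/
import Mathlib


/-- Let `X` be a module of a graph `G` with maximum degree `Δ`, let `α`
be a frozen `(Δ+1)`-colouring of `G`, and let `a ≠ b` be two colours both appearing
on `X`. Then the colouring `β` obtained from `α` by swapping the colours `a` and `b`
on the vertices of `X` is also a frozen `(Δ+1)`-colouring of `G`. -/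
theorem stmt_6 {V : Type*} [Fintype V] [DecidableEq V] (G : SimpleGraph V)
    [DecidableRel G.Adj] (Δ : ℕ) (hΔ : ∀ v, G.degree v ≤ Δ)
    (X : Finset V)
    (hX : ∀ v ∉ X, (∀ x ∈ X, G.Adj v x) ∨ (∀ x ∈ X, ¬ G.Adj v x))
    (α : V → Fin (Δ + 1))
    (hproper : ∀ u v, G.Adj u v → α u ≠ α v)
    (hfrozen : ∀ v c, ∃ u, (u = v ∨ G.Adj v u) ∧ α u = c)
    (a b : Fin (Δ + 1)) (hab : a ≠ b)
    (ha : ∃ x ∈ X, α x = a) (hb : ∃ x ∈ X, α x = b)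
    (β : V → Fin (Δ + 1))
    (hβ : ∀ v, β v = if v ∈ X then
        (if α v = a then b else if α v = b then a else α v) else α v) :
    (∀ u v, G.Adj u v → β u ≠ β v) ∧
      (∀ v c, ∃ u, (u = v ∨ G.Adj v u) ∧ β u = c) := by
  set s : Fin (Δ + 1) → Fin (Δ + 1) :=
    fun c => if c = a then b else if c = b then a else c with hs
  have hβ' : ∀ v, β v = if v ∈ X then s (α v) else α v := by
    intro v; rw [hβ]
  have hsfix : ∀ c, c ≠ a → c ≠ b → s c = c := by
    intro c h1 h2
    show (if c = a then b else if c = b then a else c) = c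
    rw [if_neg h1, if_neg h2]
  have hsa : s a = b := by
    show (if a = a then b else if a = b then a else a) = b
    rw [if_pos rfl]
  have hsb : s b = a := by
    show (if b = a then b else if b = b then a else b) = a
    rw [if_neg (Ne.symm hab), if_pos rfl]
  have hss : ∀ c, s (s c) = c := by
    intro c
    by_cases h1 : c = a
    · rw [h1, hsa, hsb]
    · by_cases h2 : c = b
      · rw [h2, hsb, hsa]
      · rw [hsfix c h1 h2, hsfix c h1 h2]
  have hsinj : Function.Injective s := by
    intro x y h
    have := congrArg s h
    rwa [hss, hss] at this
  -- vertices outside X adjacent to something in X avoid colours a and b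
  have hout : ∀ v ∉ X, ∀ x ∈ X, G.Adj v x → α v ≠ a ∧ α v ≠ b := by
    intro v hv x hx hadj
    have hall : ∀ y ∈ X, G.Adj v y := by
      rcases hX v hv with h | h
      · exact h
      · exact absurd hadj (h x hx)
    obtain ⟨xa, hxa, hxa'⟩ := ha
    obtain ⟨xb, hxb, hxb'⟩ := hb
    exact ⟨hxa' ▸ hproper v xa (hall xa hxa), hxb' ▸ hproper v xb (hall xb hxb)⟩
  constructor
  · intro u v huv heq
    rw [hβ' u, hβ' v] at heq
    by_cases hu : u ∈ X <;> by_cases hv : v ∈ X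
    · rw [if_pos hu, if_pos hv] at heq
      exact hproper u v huv (hsinj heq)
    · rw [if_pos hu, if_neg hv] at heq
      obtain ⟨h1, h2⟩ := hout v hv u hu huv.symm
      by_cases hua : α u = a
      · rw [hua] at heq
        exact h2 (by simpa [hs, if_pos rfl, if_neg (Ne.symm hab)] using heq.symm)
      · by_cases hub : α u = b
        · rw [hub] at heq
          exact h1 (by simpa [hs, if_neg (Ne.symm hab)] using heq.symm)
        · rw [hsfix _ hua hub] at heq
          exact hproper u v huv heq
    · rw [if_neg hu, if_pos hv] at heq
      obtain ⟨h1, h2⟩ := hout u hu v hv huv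
      by_cases hva : α v = a
      · rw [hva] at heq
        exact h2 (by simpa [hs, if_pos rfl, if_neg (Ne.symm hab)] using heq)
      · by_cases hvb : α v = b
        · rw [hvb] at heq
          exact h1 (by simpa [hs, if_neg (Ne.symm hab)] using heq)
        · rw [hsfix _ hva hvb] at heq
          exact hproper u v huv heq
    · rw [if_neg hu, if_neg hv] at heq
      exact hproper u v huv heq
  · intro v c
    by_cases hv : v ∈ X
    · obtain ⟨u, hu, hc⟩ := hfrozen v (s c)
      refine ⟨u, hu, ?_⟩
      rw [hβ' u]
      by_cases hux : u ∈ X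
      · rw [if_pos hux, hc, hss]
      · rw [if_neg hux]
        have hadj : G.Adj v u := by
          rcases hu with rfl | h
          · exact absurd hv hux
          · exact h
        obtain ⟨h1, h2⟩ := hout u hux v hv hadj.symm
        have h3 : s (α u) = α u := hsfix _ h1 h2
        rw [hc] at h3
        rw [hss] at h3
        rw [hc, ← h3]
    · by_cases hadj : ∃ x ∈ X, G.Adj v x
      · obtain ⟨x0, hx0, hadj0⟩ := hadj
        have hall : ∀ y ∈ X, G.Adj v y := by
          rcases hX v hv with h | h
          · exact h
          · exact absurd hadj0 (h x0 hx0)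
        by_cases hca : c = a
        · obtain ⟨x, hx, hxb⟩ := hb
          refine ⟨x, Or.inr (hall x hx), ?_⟩
          rw [hβ' x, if_pos hx, hxb, hca]
          exact hsb
        · by_cases hcb : c = b
          · obtain ⟨x, hx, hxa⟩ := ha
            refine ⟨x, Or.inr (hall x hx), ?_⟩
            rw [hβ' x, if_pos hx, hxa, hcb]
            exact hsa
          · obtain ⟨u, hu, hc⟩ := hfrozen v c
            refine ⟨u, hu, ?_⟩
            rw [hβ' u]
            by_cases hux : u ∈ X
            · rw [if_pos hux, hc, hsfix _ hca hcb]
            · rw [if_neg hux, hc]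
      · obtain ⟨u, hu, hc⟩ := hfrozen v c
        have hux : u ∉ X := by
          intro hmem
          rcases hu with rfl | h
          · exact hv hmem
          · exact hadj ⟨u, hmem, h⟩
        exact ⟨u, hu, by rw [hβ' u, if_neg hux, hc]⟩
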